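/- arXiv:0909.3086 — 2 statements merged into one kernel-verified Lean document; each statement's English description precedes it below -/
import Mathlib

section
/- Suppose f_k → f uniformly in L(HE,p), m ≥ 0, and for each k the set T_k = {0 = t₀^k < t₁^k < ⋯ < t_{2m}^k = 1} witnesses O_n(f_k) ≥ m (that is, f_k(t_{2i}^k) = p and f_k(t_{2i+1}^k) = q_n). If T ⊆ [0,1] is a subsequential limit of the sets T_k in the Hausdorff metric on compact subsets of [0,1], then T is a set of 2m+1 points witnessing O_n(f) ≥ m. -/
open unitInterval

noncomputable section

/-- The `n`-th circle of the Hawaiian earring: the circle of radius `1/n`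
centered at `(1/n, 0)` in the plane. -/
def heCircle (n : ℕ) : Set (ℝ × ℝ) :=
  {z : ℝ × ℝ | (z.1 - 1 / (n : ℝ)) ^ 2 + z.2 ^ 2 = (1 / (n : ℝ)) ^ 2}

/-- The Hawaiian earring `HE = ⋃_{n ≥ 1} X_n`. -/
def HEset : Set (ℝ × ℝ) := ⋃ n : ℕ, ⋃ _ : 1 ≤ n, heCircle n

lemma origin_mem_HEset : ((0, 0) : ℝ × ℝ) ∈ HEset := by
  refine Set.mem_iUnion.2 ⟨1, Set.mem_iUnion.2 ⟨le_refl 1, ?_⟩⟩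
  simp [heCircle]

/-- The basepoint `p = (0,0)` of the Hawaiian earring. -/
def hep : HEset := ⟨(0, 0), origin_mem_HEset⟩

/-- The point of the `n`-th circle at (counterclockwise) angle `θ` from the basepoint. -/
def circlePt (n : ℕ) (θ : ℝ) : ℝ × ℝ :=
  (1 / (n : ℝ) - Real.cos θ / n, -(Real.sin θ / n))

lemma circlePt_mem (n : ℕ) (θ : ℝ) : circlePt n θ ∈ HEset := by
  rcases Nat.eq_zero_or_pos n with h | h
  · subst h
    simpa [circlePt] using origin_mem_HEset
  · refine Set.mem_iUnion.2 ⟨n, Set.mem_iUnion.2 ⟨h, ?_⟩⟩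
    have hn : (n : ℝ) ≠ 0 := Nat.cast_ne_zero.2 h.ne'
    have hsc := Real.sin_sq_add_cos_sq θ
    simp only [heCircle, circlePt, Set.mem_setOf_eq]
    field_simp
    linear_combination hsc

/-- The standard loop `x_n` traversing the `n`-th circle of the Hawaiian earring
once counterclockwise.  (For `n = 0` this degenerates to the constant loop at `p`.) -/
def xLoop (n : ℕ) : Path hep hep where
  toFun := fun τ => ⟨circlePt n (2 * Real.pi * τ), circlePt_mem n _⟩
  continuous_toFun := by
    apply Continuous.subtype_mk
    have h1 : Continuous fun θ : ℝ => circlePt n θ := by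
      unfold circlePt; fun_prop
    exact h1.comp (by fun_prop)
  source' := by
    apply Subtype.ext
    simp [circlePt, hep]
  target' := by
    apply Subtype.ext
    simp [circlePt, hep, Real.cos_two_pi, Real.sin_two_pi]

attribute [local instance] Path.Homotopic.setoid

/-- The loop corresponding to a single letter `x_n` (if the Bool is `true`)
or `x_n⁻¹` (if the Bool is `false`). -/
def heLetter (l : ℕ × Bool) : Path hep hep :=
  if l.2 then xLoop l.1 else (xLoop l.1).symm

/-- The based loop corresponding to a finite word in the letters `x_n^{±1}`,
obtained by concatenating the letter loops. -/
def wordLoop (L : List (ℕ × Bool)) : Path hep hep :=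
  L.foldr (fun l acc => (heLetter l).trans acc) (Path.refl hep)

/-- The word `x_n x_k x_n⁻¹ x_k⁻¹`. -/
def commWord (n k : ℕ) : List (ℕ × Bool) := [(n, true), (k, true), (n, false), (k, false)]

/-- The loop `a(n,k)`, corresponding to the word `(x_n x_k x_n⁻¹ x_k⁻¹)^{n+k}`. -/
def aLoop (n k : ℕ) : Path hep hep :=
  wordLoop ((List.replicate (n + k) (commWord n k)).flatten)

/-- The loop `w(n,k)`, corresponding to the word `(x₁ x_k x₁⁻¹ x_k⁻¹)^{n}`. -/
def wLoop (n k : ℕ) : Path hep hep :=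
  wordLoop ((List.replicate n (commWord 1 k)).flatten)

/-- The fundamental group `π₁(HE, p)` as the set of path-homotopy classes of based
loops at `p`. -/
abbrev piHE : Type := Path.Homotopic.Quotient hep hep

/-- The quotient topology on `π₁(HE,p)` induced by the natural surjection from the
space of based loops (with the compact-open topology, i.e. uniform convergence). -/
instance : TopologicalSpace piHE :=
  inferInstanceAs (TopologicalSpace (Quotient (Path.Homotopic.setoid hep hep)))

/-- The natural quotient map `q : L(HE,p) → π₁(HE,p)`. -/
def qHE : Path hep hep → piHE := fun f => ⟦f⟧

/-- Multiplication on `π₁(HE,p)` by concatenation of path classes. -/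
def piMul : piHE × piHE → piHE := fun z => Path.Homotopic.Quotient.trans z.1 z.2

/-- Inversion on `π₁(HE,p)`, induced by reversal of loops. -/
def piInv : piHE → piHE :=
  Quotient.map Path.symm fun _ _ h => Nonempty.map Path.Homotopy.symm₂ h

/-- `IsOscWitness n f m t` says that the points `t 0 = 0 < t 1 < ⋯ < t (2m) = 1`
witness that the oscillation number `O_n(f)` is at least `m`: the even-indexed points
are sent by `f` to `p = (0,0)` and the odd-indexed points to `q_n = (2/n, 0)`. -/
def IsOscWitness (n : ℕ) (f : Path hep hep) (m : ℕ) (t : Fin (2 * m + 1) → I) : Prop :=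
  StrictMono t ∧ t ⟨0, by omega⟩ = 0 ∧ t ⟨2 * m, by omega⟩ = 1 ∧
    (∀ i : Fin (2 * m + 1), Even (i : ℕ) → ((f (t i) : ℝ × ℝ) = (0, 0))) ∧
    (∀ i : Fin (2 * m + 1), ¬ Even (i : ℕ) → ((f (t i) : ℝ × ℝ) = (2 / (n : ℝ), 0)))

/-- The oscillation number `O_n(f)`: the largest `m` admitting a witness
(`0` if there is none, and junk if there are arbitrarily large ones). -/
def OscNum (n : ℕ) (f : Path hep hep) : ℕ :=
  sSup {m : ℕ | ∃ t, IsOscWitness n f m t}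

/-- The finite wedge `Y_N = {p} ∪ X₁ ∪ ⋯ ∪ X_N`. -/
def Yset (N : ℕ) : Set (ℝ × ℝ) :=
  insert (0, 0) (⋃ n ∈ Set.Icc 1 N, heCircle n)

/-- The set `F` of pairs `([a(n,k)], [w(n,k)])` for `n, k ≥ 2`. -/
def Fset : Set (piHE × piHE) :=
  {z | ∃ n k : ℕ, 2 ≤ n ∧ 2 ≤ k ∧ z = (⟦aLoop n k⟧, ⟦wLoop n k⟧)}

/-- The set `A = M(F)` of products `[a(n,k)] ⬝ [w(n,k)]` for `n, k ≥ 2`. -/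
def Aset : Set piHE :=
  {c | ∃ n k : ℕ, 2 ≤ n ∧ 2 ≤ k ∧ c = Path.Homotopic.Quotient.trans ⟦aLoop n k⟧ ⟦wLoop n k⟧}


/-- If `fs k → f` uniformly, each `fs k` has a witness `t k` showing `O_n(fs k) ≥ m`,
and `T` is a subsequential limit of the witness sets in the Hausdorff metric on `[0,1]`,
then `T` is a set of `2m+1` points witnessing `O_n(f) ≥ m`. -/
theorem oscWitness_of_hausdorff_limit (n : ℕ) (hn : 1 ≤ n) (m : ℕ)
    (fs : ℕ → Path hep hep) (f : Path hep hep)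
    (hconv : TendstoUniformly (fun k (τ : I) => ((fs k) τ : ℝ × ℝ))
      (fun τ => (f τ : ℝ × ℝ)) Filter.atTop)
    (t : ∀ _ : ℕ, Fin (2 * m + 1) → I)
    (ht : ∀ k, IsOscWitness n (fs k) m (t k))
    (T : Set I) (hTc : IsCompact T) (hTne : T.Nonempty)
    (φ : ℕ → ℕ) (hφ : StrictMono φ)
    (hlim : Filter.Tendsto (fun l => Metric.hausdorffDist (Set.range (t (φ l))) T)
      Filter.atTop (nhds 0)) :
    ∃ s : Fin (2 * m + 1) → I, IsOscWitness n f m s ∧ Set.range s = T := by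
  classical
  -- extract a pointwise-convergent subsequence of the witness tuples
  obtain ⟨s, -, ψ, hψ, hs⟩ :=
    (isCompact_univ : IsCompact (Set.univ : Set (Fin (2 * m + 1) → I))).tendsto_subseq
      (x := fun l => t (φ l)) (fun _ => Set.mem_univ _)
  set sg : ℕ → ℕ := φ ∘ ψ with hsgdef
  have hsg : StrictMono sg := hφ.comp hψ
  have hsgtop : Filter.Tendsto sg Filter.atTop Filter.atTop := hsg.tendsto_atTop
  have ptw : ∀ i, Filter.Tendsto (fun l => t (sg l) i) Filter.atTop (nhds (s i)) := by
    intro i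
    exact (tendsto_pi_nhds.1 hs) i
  have ptwR : ∀ i, Filter.Tendsto (fun l => ((t (sg l) i : I) : ℝ)) Filter.atTop
      (nhds ((s i : I) : ℝ)) := fun i => (continuous_subtype_val.tendsto _).comp (ptw i)
  -- uniform convergence along the subsequence
  have hconvsg : TendstoUniformly (fun l (τ : I) => ((fs (sg l)) τ : ℝ × ℝ))
      (fun τ => (f τ : ℝ × ℝ)) Filter.atTop := by
    rw [Metric.tendstoUniformly_iff] at hconv ⊢
    intro ε hε
    exact hsgtop.eventually (hconv ε hε)
  have hfc : Continuous fun τ : I => (f τ : ℝ × ℝ) :=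
    continuous_subtype_val.comp f.continuous
  have hval : ∀ i, Filter.Tendsto (fun l => ((fs (sg l)) (t (sg l) i) : ℝ × ℝ))
      Filter.atTop (nhds (f (s i) : ℝ × ℝ)) := fun i =>
    hconvsg.tendsto_comp hfc.continuousAt (ptw i)
  have hvalEven : ∀ i : Fin (2 * m + 1), Even (i : ℕ) → (f (s i) : ℝ × ℝ) = (0, 0) := by
    intro i hi
    refine tendsto_nhds_unique (hval i) ?_
    have : (fun l => ((fs (sg l)) (t (sg l) i) : ℝ × ℝ)) = fun _ => ((0 : ℝ), (0 : ℝ)) := by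
      funext l; exact (ht (sg l)).2.2.2.1 i hi
    rw [this]; exact tendsto_const_nhds
  have hvalOdd : ∀ i : Fin (2 * m + 1), ¬ Even (i : ℕ) →
      (f (s i) : ℝ × ℝ) = (2 / (n : ℝ), 0) := by
    intro i hi
    refine tendsto_nhds_unique (hval i) ?_
    have : (fun l => ((fs (sg l)) (t (sg l) i) : ℝ × ℝ)) = fun _ => ((2 / (n : ℝ)), (0 : ℝ)) := by
      funext l; exact (ht (sg l)).2.2.2.2 i hi
    rw [this]; exact tendsto_const_nhds
  have hmono : Monotone s := by
    intro i j hij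
    have hle : ∀ l, ((t (sg l) i : I) : ℝ) ≤ ((t (sg l) j : I) : ℝ) := fun l =>
      Subtype.coe_le_coe.2 ((ht (sg l)).1.monotone hij)
    have : ((s i : I) : ℝ) ≤ ((s j : I) : ℝ) :=
      le_of_tendsto_of_tendsto' (ptwR i) (ptwR j) hle
    exact Subtype.coe_le_coe.1 this
  have hne : (0 : ℝ) < 2 / (n : ℝ) := by
    have : (0 : ℝ) < (n : ℝ) := by exact_mod_cast hn
    positivity
  have hsmono : StrictMono s := by
    intro i j hij
    refine lt_of_le_of_ne (hmono hij.le) ?_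
    intro heq
    have hi1 : (i : ℕ) + 1 < 2 * m + 1 := by
      have := hij
      rw [Fin.lt_def] at this
      omega
    set i' : Fin (2 * m + 1) := ⟨(i : ℕ) + 1, hi1⟩ with hi'def
    have h1 : s i ≤ s i' := hmono (by rw [Fin.le_def]; simp [hi'def])
    have h2 : s i' ≤ s j := by
      refine hmono ?_
      rw [Fin.le_def]
      have := hij; rw [Fin.lt_def] at this
      simpa [hi'def] using this
    have heq' : s i = s i' := le_antisymm h1 (heq ▸ h2)
    have hfi : (f (s i) : ℝ × ℝ) = (f (s i') : ℝ × ℝ) := by rw [heq']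
    rcases Nat.even_or_odd (i : ℕ) with he | ho
    · have h3 : (f (s i) : ℝ × ℝ) = (0, 0) := hvalEven i he
      have h4 : (f (s i') : ℝ × ℝ) = (2 / (n : ℝ), 0) := by
        refine hvalOdd i' ?_
        simp [hi'def, Nat.even_add_one, he]
      rw [h3, h4] at hfi
      exact absurd (congrArg Prod.fst hfi) (by simpa using hne.ne)
    · have h3 : (f (s i) : ℝ × ℝ) = (2 / (n : ℝ), 0) := hvalOdd i (Nat.not_even_iff_odd.2 ho)
      have h4 : (f (s i') : ℝ × ℝ) = (0, 0) := by
        refine hvalEven i' ?_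
        simp [hi'def, Nat.even_add_one, Nat.not_even_iff_odd.2 ho]
      rw [h3, h4] at hfi
      exact absurd (congrArg Prod.fst hfi) (by simpa using hne.ne')
  have hs0 : s ⟨0, by omega⟩ = 0 := by
    refine tendsto_nhds_unique (ptw ⟨0, by omega⟩) ?_
    have : (fun l => t (sg l) ⟨0, by omega⟩) = fun _ => (0 : I) := by
      funext l; exact (ht (sg l)).2.1
    rw [this]; exact tendsto_const_nhds
  have hs1 : s ⟨2 * m, by omega⟩ = 1 := by
    refine tendsto_nhds_unique (ptw ⟨2 * m, by omega⟩) ?_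
    have : (fun l => t (sg l) ⟨2 * m, by omega⟩) = fun _ => (1 : I) := by
      funext l; exact (ht (sg l)).2.2.1
    rw [this]; exact tendsto_const_nhds
  -- boundedness facts for Hausdorff distances
  have hbdd : ∀ S : Set I, Bornology.IsBounded S := fun S =>
    (isCompact_univ.isBounded).subset (Set.subset_univ S)
  have hrne : ∀ k, (Set.range (t k)).Nonempty := fun k => Set.range_nonempty _
  have hsne : (Set.range s).Nonempty := Set.range_nonempty _
  -- the range of s equals T
  have hrangeT : Set.range s = T := by
    have hzero : Metric.hausdorffDist (Set.range s) T = 0 := by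
      refine le_antisymm ?_ Metric.hausdorffDist_nonneg
      refine le_of_forall_pos_le_add ?_
      intro ε hε
      rw [zero_add]
      -- eventually all coordinates are ε/2-close
      have h1 : ∀ᶠ l in Filter.atTop, ∀ i, dist (t (sg l) i) (s i) < ε / 2 := by
        rw [Filter.eventually_all]
        intro i
        have := (ptw i)
        rw [Metric.tendsto_nhds] at this
        exact this (ε / 2) (by positivity)
      have h2 : ∀ᶠ l in Filter.atTop,
          Metric.hausdorffDist (Set.range (t (sg l))) T < ε / 2 := by
        have hlimsg : Filter.Tendsto (fun l => Metric.hausdorffDist (Set.range (t (sg l))) T)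
            Filter.atTop (nhds 0) := hlim.comp hψ.tendsto_atTop
        rw [Metric.tendsto_nhds] at hlimsg
        filter_upwards [hlimsg (ε / 2) (by positivity)] with l hl
        rw [Real.dist_eq, abs_sub_comm, abs_sub_lt_iff] at hl
        linarith [hl.2]
      obtain ⟨l, hl1, hl2⟩ := (h1.and h2).exists
      have hAB : Metric.hausdorffDist (Set.range s) (Set.range (t (sg l))) ≤ ε / 2 := by
        refine Metric.hausdorffDist_le_of_mem_dist (by positivity) ?_ ?_
        · rintro x ⟨i, rfl⟩
          exact ⟨t (sg l) i, Set.mem_range_self i, by rw [dist_comm]; exact (hl1 i).le⟩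
        · rintro x ⟨i, rfl⟩
          exact ⟨s i, Set.mem_range_self i, (hl1 i).le⟩
      have hfin : EMetric.hausdorffEdist (Set.range s) (Set.range (t (sg l))) ≠ ⊤ :=
        Metric.hausdorffEdist_ne_top_of_nonempty_of_bounded hsne (hrne _) (hbdd _) (hbdd _)
      calc Metric.hausdorffDist (Set.range s) T
          ≤ Metric.hausdorffDist (Set.range s) (Set.range (t (sg l))) +
            Metric.hausdorffDist (Set.range (t (sg l))) T :=
            Metric.hausdorffDist_triangle hfin
        _ ≤ ε / 2 + ε / 2 := add_le_add hAB hl2.le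
        _ = ε := by ring
    have hclosed1 : IsClosed (Set.range s) := (Set.finite_range s).isClosed
    have hfin : EMetric.hausdorffEdist (Set.range s) T ≠ ⊤ :=
      Metric.hausdorffEdist_ne_top_of_nonempty_of_bounded hsne hTne (hbdd _) (hbdd _)
    exact (hclosed1.hausdorffDist_zero_iff_eq hTc.isClosed hfin).1 hzero
  exact ⟨s, ⟨hsmono, hs0, hs1, hvalEven, hvalOdd⟩, hrangeT⟩

end
end

section
/- For every open set U ⊆ π₁(HE,p) (quotient topology) containing the class [P] of the constant loop, there exist N and K such that [a(n,k)] ∈ U for all n ≥ N and k ≥ K; moreover, for each fixed N, there exists K₂ such that [w(N,k)] ∈ U for all k ≥ K₂. -/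
open unitInterval

noncomputable section

attribute [local instance] Path.Homotopic.setoid

/-! ### Auxiliary lemmas -/

lemma xLoop_zero : xLoop 0 = Path.refl hep := by
  ext t <;> simp [xLoop, circlePt, hep, Path.refl] <;> rfl

lemma comm_cancel {X : Type*} [TopologicalSpace X] {x : X} (a g : Path x x) :
    (a.trans ((Path.refl x).trans (a.symm.trans ((Path.refl x).trans g)))).Homotopic g := by
  have h1 : ((Path.refl x).trans g).Homotopic g := ⟨Path.Homotopy.reflTrans g⟩
  have h2 : (a.symm.trans ((Path.refl x).trans g)).Homotopic (a.symm.trans g) :=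
    (Path.Homotopic.refl a.symm).hcomp h1
  have h3 : ((Path.refl x).trans (a.symm.trans ((Path.refl x).trans g))).Homotopic
      (a.symm.trans g) := Path.Homotopic.trans ⟨Path.Homotopy.reflTrans _⟩ h2
  have h4 : (a.trans ((Path.refl x).trans (a.symm.trans ((Path.refl x).trans g)))).Homotopic
      (a.trans (a.symm.trans g)) := (Path.Homotopic.refl a).hcomp h3
  have h5 : (a.trans (a.symm.trans g)).Homotopic ((a.trans a.symm).trans g) :=
    ⟨(Path.Homotopy.transAssoc a a.symm g).symm⟩
  have h6 : ((a.trans a.symm).trans g).Homotopic ((Path.refl x).trans g) :=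
    Path.Homotopic.hcomp ⟨(Path.Homotopy.reflTransSymm a).symm⟩ (Path.Homotopic.refl g)
  exact h4.trans (h5.trans (h6.trans h1))

lemma wLoop_zero_class (N : ℕ) : (⟦wLoop N 0⟧ : piHE) = ⟦Path.refl hep⟧ := by
  induction N with
  | zero => rfl
  | succ n ih =>
    have hw : wLoop (n + 1) 0 =
        (xLoop 1).trans ((Path.refl hep).trans
          ((xLoop 1).symm.trans ((Path.refl hep).trans (wLoop n 0)))) := by
      simp [wLoop, wordLoop, commWord, List.replicate_succ, heLetter, xLoop_zero,
        Path.refl_symm]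
    rw [hw, ← ih]
    exact Quotient.sound (comm_cancel _ _)

lemma dist_circlePt (n : ℕ) (θ : ℝ) : dist (circlePt n θ) ((0, 0) : ℝ × ℝ) ≤ 2 / n := by
  rcases Nat.eq_zero_or_pos n with h | h
  · subst h; simp [circlePt]
  · have hn : (0 : ℝ) < n := by exact_mod_cast h
    rw [Prod.dist_eq]
    simp only [Real.dist_eq, circlePt]
    apply max_le
    · rw [sub_zero, ← sub_div, abs_div, abs_of_pos hn]
      have h2 : |1 - Real.cos θ| ≤ 2 := by
        have := Real.neg_one_le_cos θ; have := Real.cos_le_one θ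
        rw [abs_le]; constructor <;> linarith
      gcongr
    · rw [sub_zero, abs_neg, abs_div, abs_of_pos hn]
      have h2 : |Real.sin θ| ≤ 2 := by
        have := Real.neg_one_le_sin θ; have := Real.sin_le_one θ
        rw [abs_le]; constructor <;> linarith
      gcongr

lemma heLetter_dist (l : ℕ × Bool) (t : I) : dist (heLetter l t) hep ≤ 2 / l.1 := by
  obtain ⟨n, b⟩ := l
  have key : ∀ θ : ℝ, dist ((⟨circlePt n θ, circlePt_mem n θ⟩ : HEset)) hep ≤ 2 / n := by
    intro θ; rw [Subtype.dist_eq]; exact dist_circlePt n θ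
  cases b
  · show dist ((xLoop n).symm t) hep ≤ 2 / n
    rw [Path.symm_apply]
    exact key _
  · exact key _

lemma dist_trans_le {X : Type*} [TopologicalSpace X] [MetricSpace X] {x : X} {C : ℝ}
    {f f' g g' : Path x x}
    (hf : ∀ t, dist (f t) (f' t) ≤ C) (hg : ∀ t, dist (g t) (g' t) ≤ C) (t : I) :
    dist ((f.trans g) t) ((f'.trans g') t) ≤ C := by
  rw [Path.trans_apply, Path.trans_apply]
  split_ifs with h
  · exact hf _
  · exact hg _

lemma wordLoop_dist {C : ℝ} (hC : 0 ≤ C) {L L' : List (ℕ × Bool)}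
    (h : List.Forall₂ (fun l l' => ∀ s : I, dist (heLetter l s) (heLetter l' s) ≤ C) L L') :
    ∀ t, dist (wordLoop L t) (wordLoop L' t) ≤ C := by
  induction h with
  | nil => intro t; simpa [wordLoop] using hC
  | cons h _ ih => intro t; exact dist_trans_le h ih t

lemma wordLoop_dist_const {C : ℝ} (hC : 0 ≤ C) :
    ∀ L : List (ℕ × Bool), (∀ l ∈ L, (2 : ℝ) / l.1 ≤ C) →
      ∀ t, dist (wordLoop L t) hep ≤ C := by
  intro L
  induction L with
  | nil => intro _ t; simpa [wordLoop] using hC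
  | cons a L ih =>
    intro h t
    have h1 : ∀ s : I, dist (heLetter a s) hep ≤ C :=
      fun s => (heLetter_dist a s).trans (h a List.mem_cons_self)
    have h2 := ih (fun l hl => h l (List.mem_cons_of_mem a hl))
    show dist (((heLetter a).trans (wordLoop L)) t) hep ≤ C
    rw [Path.trans_apply]
    split_ifs
    · exact h1 _
    · exact h2 _

lemma exists_eps {V : Set (Path hep hep)} (hV : IsOpen V) {f : Path hep hep} (hf : f ∈ V) :
    ∃ ε > 0, ∀ g : Path hep hep, (∀ t, dist (g t) (f t) ≤ ε) → g ∈ V := by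
  obtain ⟨W, hW, hVW⟩ := isOpen_induced_iff.mp hV
  have hfW : (f : C(I, HEset)) ∈ W := by rw [← hVW] at hf; exact hf
  obtain ⟨δ, hδ, hball⟩ := Metric.isOpen_iff.mp hW _ hfW
  refine ⟨δ / 2, by linarith, fun g hg => ?_⟩
  have hle : dist (g : C(I, HEset)) (f : C(I, HEset)) ≤ δ / 2 :=
    (ContinuousMap.dist_le (by linarith)).mpr fun t => hg t
  have hmem : (g : C(I, HEset)) ∈ Metric.ball (f : C(I, HEset)) δ := by
    rw [Metric.mem_ball]; linarith
  rw [← hVW]; exact hball hmem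

lemma two_div_le {ε : ℝ} (hε : 0 < ε) {n : ℕ} (h : ⌈2 / ε⌉₊ + 1 ≤ n) : 2 / (n : ℝ) ≤ ε := by
  have h1 : 2 / ε ≤ (n : ℝ) :=
    le_trans (Nat.le_ceil _) (by exact_mod_cast Nat.le_of_succ_le h)
  have hnpos : (0 : ℝ) < n := lt_of_lt_of_le (by positivity) h1
  rw [div_le_iff₀ hnpos, mul_comm]
  exact (div_le_iff₀ hε).mp h1

lemma letter_k_close (k : ℕ) (b : Bool) (s : I) :
    dist (heLetter (k, b) s) (heLetter (0, b) s) ≤ 2 / (k : ℝ) := by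
  have h0 : heLetter (0, b) s = hep := by
    cases b <;> simp [heLetter, xLoop_zero, Path.refl_symm]
  rw [h0]
  exact heLetter_dist (k, b) s

lemma forall2_replicate (N k : ℕ) :
    List.Forall₂ (fun l l' => ∀ s : I, dist (heLetter l s) (heLetter l' s) ≤ 2 / (k : ℝ))
      ((List.replicate N (commWord 1 k)).flatten)
      ((List.replicate N (commWord 1 0)).flatten) := by
  have hk : (0 : ℝ) ≤ 2 / (k : ℝ) := by positivity
  induction N with
  | zero => simp
  | succ n ih =>
    rw [List.replicate_succ, List.replicate_succ, List.flatten_cons, List.flatten_cons]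
    refine List.rel_append ?_ ih
    show List.Forall₂ _ ((1, true) :: (k, true) :: (1, false) :: [(k, false)])
      ((1, true) :: (0, true) :: (1, false) :: [(0, false)])
    refine List.Forall₂.cons (fun s => by simpa using hk) ?_
    refine List.Forall₂.cons (letter_k_close k true) ?_
    refine List.Forall₂.cons (fun s => by simpa using hk) ?_
    exact List.Forall₂.cons (letter_k_close k false) List.Forall₂.nil

/-- For every open `U ⊆ π₁(HE,p)` containing the class of the constant loop there
exist `N, K` with `[a(n,k)] ∈ U` for all `n ≥ N`, `k ≥ K`; moreover for each fixed
`N ≥ 2` there is `K₂` with `[w(N,k)] ∈ U` for all `k ≥ K₂`. -/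
theorem mem_open_eventually (U : Set piHE) (hU : IsOpen U)
    (hP : (⟦Path.refl hep⟧ : piHE) ∈ U) :
    (∃ N K : ℕ, ∀ n k : ℕ, 2 ≤ n → 2 ≤ k → N ≤ n → K ≤ k → (⟦aLoop n k⟧ : piHE) ∈ U) ∧
    (∀ N : ℕ, 2 ≤ N → ∃ K₂ : ℕ, ∀ k : ℕ, 2 ≤ k → K₂ ≤ k → (⟦wLoop N k⟧ : piHE) ∈ U) := by
  have hq : Continuous (fun f : Path hep hep => (⟦f⟧ : piHE)) := continuous_quotient_mk'
  have hV : IsOpen {f : Path hep hep | (⟦f⟧ : piHE) ∈ U} := hU.preimage hq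
  constructor
  · obtain ⟨ε, hε, hball⟩ := exists_eps hV (show Path.refl hep ∈ _ from hP)
    refine ⟨⌈2 / ε⌉₊ + 1, ⌈2 / ε⌉₊ + 1, fun n k h2n h2k hn hk => ?_⟩
    apply hball
    intro t
    refine wordLoop_dist_const hε.le _ ?_ t
    intro l hl
    rw [List.mem_flatten] at hl
    obtain ⟨s, hs, hls⟩ := hl
    rw [List.mem_replicate] at hs
    rcases hs with ⟨-, rfl⟩
    simp only [commWord, List.mem_cons, List.not_mem_nil, or_false] at hls
    rcases hls with rfl | rfl | rfl | rfl
    exacts [two_div_le hε hn, two_div_le hε hk, two_div_le hε hn, two_div_le hε hk]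
  · intro N h2N
    have hmem : wLoop N 0 ∈ {f : Path hep hep | (⟦f⟧ : piHE) ∈ U} := by
      show (⟦wLoop N 0⟧ : piHE) ∈ U
      rw [wLoop_zero_class]; exact hP
    obtain ⟨ε, hε, hball⟩ := exists_eps hV hmem
    refine ⟨⌈2 / ε⌉₊ + 1, fun k h2k hk => ?_⟩
    apply hball
    intro t
    exact le_trans (wordLoop_dist (by positivity) (forall2_replicate N k) t)
      (two_div_le hε hk)


end
end
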